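/- Let A and A' be approval profiles over a candidate set C and let W ⊆ C with |W| = k. Suppose that for every voter v we have A'(v) ⊆ A(v) and (A(v) ∖ A'(v)) ∩ W = ∅ (each voter only removes approvals of candidates not in W). If W is a winning committee of size k under Approval Voting in A, then W is a winning committee of size k under Approval Voting in A'. -/
import Mathlib


open Finset

variable {V C : Type*}

/-- The Approval Voting (AV) score of a set `S` under approval profile `A`,
i.e. the `w`-Thiele score with `w x = x`. -/
def avScore [Fintype V] [DecidableEq C] (A : V → Finset C) (S : Finset C) : ℚ :=
  ∑ v, ((S ∩ A v).card : ℚ)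

/-- `W` is a winning committee of size `k` under Approval Voting in `A`. -/
def IsWinningAV [Fintype V] [DecidableEq C] (k : ℕ) (A : V → Finset C) (W : Finset C) : Prop :=
  W.card = k ∧ ∀ W' : Finset C, W'.card = k → avScore A W' ≤ avScore A W

theorem stmt4 [Fintype V] [DecidableEq C]
    (k : ℕ) (A A' : V → Finset C) (W : Finset C) (hW : W.card = k)
    (hsub : ∀ v, A' v ⊆ A v) (hrem : ∀ v, (A v \ A' v) ∩ W = ∅)
    (hwin : IsWinningAV k A W) :
    IsWinningAV k A' W := by
  have hWeq : avScore A' W = avScore A W := by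
    unfold avScore
    refine Finset.sum_congr rfl fun v _ => ?_
    have heq : W ∩ A' v = W ∩ A v := by
      apply Finset.ext
      intro c
      have h := hrem v
      simp only [Finset.eq_empty_iff_forall_notMem, Finset.mem_inter, Finset.mem_sdiff] at h
      simp only [Finset.mem_inter]
      constructor
      · rintro ⟨hc, hc'⟩; exact ⟨hc, hsub v hc'⟩
      · rintro ⟨hc, hc'⟩
        refine ⟨hc, ?_⟩
        by_contra hn
        exact h c ⟨⟨hc', hn⟩, hc⟩
    rw [heq]
  refine ⟨hW, fun W' hk => ?_⟩
  have h1 : avScore A' W' ≤ avScore A W' := by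
    unfold avScore
    refine Finset.sum_le_sum fun v _ => ?_
    exact_mod_cast Finset.card_le_card (Finset.inter_subset_inter (Finset.Subset.refl _) (hsub v))
  calc avScore A' W' ≤ avScore A W' := h1
    _ ≤ avScore A W := hwin.2 W' hk
    _ = avScore A' W := hWeq.symm
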